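/- arXiv:1809.06720 — 4 statements merged into one kernel-verified Lean document; each statement's English description precedes it below -/
import Mathlib

section
/- Let G be a group, H a subgroup of G, and i ≤ j natural numbers. Then Z_i(E_i(H)) ≤ Z_j(E_j(H)). -/
open scoped commutatorElement

/-- Iterated centralizer `C_S^k(A)` of the subset `A` inside the ambient (sub)group
given by the set `S`, following Bryant: `C^0 = {1}` and
`C^{k+1}(A) = {x ∈ ⋂_{n ≤ k} N_S(C^n(A)) | [x, a] ∈ C^k(A) for all a ∈ A}`. -/
def iterCent {G : Type*} [Group G] (S A : Set G) : ℕ → Set G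
  | 0 => {1}
  | k + 1 =>
    {x | x ∈ S ∧
      (∀ n, n ≤ k → ∀ h ∈ S, (x * h * x⁻¹ ∈ iterCent S A n ↔ h ∈ iterCent S A n)) ∧
      ∀ a ∈ A, ⁅x, a⁆ ∈ iterCent S A k}
  termination_by n => n
  decreasing_by all_goals omega

/-- The `E_k`-envelopes of a subgroup (given as the set `H`) in `G`:
`E_0(H) = G` and `E_{k+1}(H) = {g ∈ E_k(H) | [g, C_{E_k(H)}^{k+1}(H)] ⊆ C_{E_k(H)}^k(H)}`. -/
def env {G : Type*} [Group G] (H : Set G) : ℕ → Set G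
  | 0 => Set.univ
  | k + 1 =>
    {g | g ∈ env H k ∧
      ∀ c ∈ iterCent (env H k) H (k + 1), ⁅g, c⁆ ∈ iterCent (env H k) H k}

/-- The upper central series `Z_k` of the (sub)group given by the set `S`:
`Z_0 = {1}` and `Z_{k+1} = {x ∈ S | [x, g] ∈ Z_k for all g ∈ S}`. -/
def upperCent {G : Type*} [Group G] (S : Set G) : ℕ → Set G
  | 0 => {1}
  | k + 1 => {x | x ∈ S ∧ ∀ g ∈ S, ⁅x, g⁆ ∈ upperCent S k}

namespace BryantAux

variable {G : Type*} [Group G]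

/-- A set is "subgroup-like". -/
def IsSG (S : Set G) : Prop :=
  (1 : G) ∈ S ∧ (∀ x ∈ S, ∀ y ∈ S, x * y ∈ S) ∧ ∀ x ∈ S, x⁻¹ ∈ S

theorem mem_iterCent_succ {S A : Set G} {x : G} {k : ℕ} :
    x ∈ iterCent S A (k + 1) ↔ x ∈ S ∧
      (∀ n, n ≤ k → ∀ h ∈ S, (x * h * x⁻¹ ∈ iterCent S A n ↔ h ∈ iterCent S A n)) ∧
      ∀ a ∈ A, ⁅x, a⁆ ∈ iterCent S A k := by
  rw [iterCent]; rfl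

theorem mem_iterCent_zero {S A : Set G} {x : G} : x ∈ iterCent S A 0 ↔ x = 1 := by
  rw [iterCent]; exact Set.mem_singleton_iff

theorem mem_upperCent_zero {S : Set G} {x : G} : x ∈ upperCent S 0 ↔ x = 1 :=
  Set.mem_singleton_iff

theorem mem_upperCent_succ {S : Set G} {x : G} {k : ℕ} :
    x ∈ upperCent S (k + 1) ↔ x ∈ S ∧ ∀ g ∈ S, ⁅x, g⁆ ∈ upperCent S k := Iff.rfl

theorem mem_env_succ {A : Set G} {g : G} {k : ℕ} :
    g ∈ env A (k + 1) ↔ g ∈ env A k ∧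
      ∀ c ∈ iterCent (env A k) A (k + 1), ⁅g, c⁆ ∈ iterCent (env A k) A k := Iff.rfl

theorem mem_env_zero {A : Set G} {g : G} : g ∈ env A 0 := Set.mem_univ g

section Generic

variable {S A : Set G}

theorem one_mem_iterCent (h1 : (1 : G) ∈ S) : ∀ n, (1 : G) ∈ iterCent S A n := by
  intro n
  induction n with
  | zero => exact mem_iterCent_zero.mpr rfl
  | succ n ih =>
    refine mem_iterCent_succ.mpr ⟨h1, fun m hm h hh => ?_, fun a ha => ?_⟩
    · rw [show (1 : G) * h * 1⁻¹ = h by group]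
    · rw [show ⁅(1 : G), a⁆ = 1 by group]
      exact ih

theorem iterCent_subset (h1 : (1 : G) ∈ S) : ∀ n, iterCent S A n ⊆ S := by
  intro n x hx
  cases n with
  | zero => rw [mem_iterCent_zero] at hx; exact hx ▸ h1
  | succ n => exact (mem_iterCent_succ.mp hx).1

theorem iterCent_closed (hS : IsSG S) :
    ∀ n, (∀ x ∈ iterCent S A n, x⁻¹ ∈ iterCent S A n) ∧
      (∀ x ∈ iterCent S A n, ∀ y ∈ iterCent S A n, x * y ∈ iterCent S A n) := by
  obtain ⟨h1, hmul, hinv⟩ := hS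
  intro n
  induction n with
  | zero =>
    constructor
    · intro x hx; rw [mem_iterCent_zero] at hx ⊢; simp [hx]
    · intro x hx y hy; rw [mem_iterCent_zero] at hx hy ⊢; simp [hx, hy]
  | succ n ih =>
    obtain ⟨ihinv, ihmul⟩ := ih
    constructor
    · intro x hx
      rw [mem_iterCent_succ] at hx ⊢
      obtain ⟨hxS, hxn, hxc⟩ := hx
      refine ⟨hinv x hxS, fun m hm h hh => ?_, fun a ha => ?_⟩
      · have h2 : x⁻¹ * h * x ∈ S := hmul _ (hmul _ (hinv x hxS) _ hh) _ hxS
        have key := hxn m hm _ h2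
        rw [show x * (x⁻¹ * h * x) * x⁻¹ = h by group] at key
        rw [inv_inv]
        exact key.symm
      · have hv : ⁅x, a⁆⁻¹ ∈ iterCent S A n := ihinv _ (hxc a ha)
        have hvS : ⁅x, a⁆⁻¹ ∈ S := iterCent_subset h1 n hv
        have h2 : x⁻¹ * ⁅x, a⁆⁻¹ * x ∈ S := hmul _ (hmul _ (hinv x hxS) _ hvS) _ hxS
        have key := hxn n le_rfl _ h2
        rw [show x * (x⁻¹ * ⁅x, a⁆⁻¹ * x) * x⁻¹ = ⁅x, a⁆⁻¹ by group] at key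
        rw [show ⁅x⁻¹, a⁆ = x⁻¹ * ⁅x, a⁆⁻¹ * x by simp only [commutatorElement_def]; group]
        exact key.mp hv
    · intro x hx y hy
      rw [mem_iterCent_succ] at hx hy ⊢
      obtain ⟨hxS, hxn, hxc⟩ := hx
      obtain ⟨hyS, hyn, hyc⟩ := hy
      refine ⟨hmul _ hxS _ hyS, fun m hm h hh => ?_, fun a ha => ?_⟩
      · have h2 : y * h * y⁻¹ ∈ S := hmul _ (hmul _ hyS _ hh) _ (hinv y hyS)
        rw [show x * y * h * (x * y)⁻¹ = x * (y * h * y⁻¹) * x⁻¹ by group]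
        exact (hxn m hm _ h2).trans (hyn m hm h hh)
      · have hu : ⁅y, a⁆ ∈ iterCent S A n := hyc a ha
        have huS : ⁅y, a⁆ ∈ S := iterCent_subset h1 n hu
        have h2 : x * ⁅y, a⁆ * x⁻¹ ∈ iterCent S A n := (hxn n le_rfl _ huS).mpr hu
        rw [show ⁅x * y, a⁆ = x * ⁅y, a⁆ * x⁻¹ * ⁅x, a⁆ by
          simp only [commutatorElement_def]; group]
        exact ihmul _ h2 _ (hxc a ha)

theorem iterCent_mono_succ (hS : IsSG S) : ∀ n, iterCent S A n ⊆ iterCent S A (n + 1) := by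
  intro n
  induction n with
  | zero =>
    intro x hx
    rw [mem_iterCent_zero] at hx
    exact hx ▸ one_mem_iterCent hS.1 1
  | succ n ih =>
    intro x hx
    have hcl := iterCent_closed (A := A) hS (n + 1)
    rw [mem_iterCent_succ] at hx ⊢
    obtain ⟨hxS, hxn, hxc⟩ := hx
    refine ⟨hxS, fun m hm h hh => ?_, fun a ha => ih (hxc a ha)⟩
    rcases Nat.lt_or_ge m (n + 1) with hlt | hge
    · exact hxn m (Nat.lt_succ_iff.mp hlt) h hh
    · have hmeq : m = n + 1 := le_antisymm hm hge
      subst hmeq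
      have hx' : x ∈ iterCent S A (n + 1) := mem_iterCent_succ.mpr ⟨hxS, hxn, hxc⟩
      constructor
      · intro hmem
        have := hcl.2 _ (hcl.2 _ (hcl.1 _ hx') _ hmem) _ hx'
        rwa [show x⁻¹ * (x * h * x⁻¹) * x = h by group] at this
      · intro hmem
        exact hcl.2 _ (hcl.2 _ hx' _ hmem) _ (hcl.1 _ hx')

theorem iterCent_mono (hS : IsSG S) : ∀ {n m : ℕ}, n ≤ m → iterCent S A n ⊆ iterCent S A m := by
  intro n m h
  induction h with
  | refl => exact subset_rfl
  | step h ih => exact ih.trans (iterCent_mono_succ hS _)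

theorem upperCent_mono_succ (h1 : (1 : G) ∈ S) : ∀ m, upperCent S m ⊆ upperCent S (m + 1) := by
  intro m
  induction m with
  | zero =>
    intro x hx
    rw [mem_upperCent_zero] at hx
    subst hx
    exact mem_upperCent_succ.mpr ⟨h1, fun g hg => by
      rw [show ⁅(1 : G), g⁆ = 1 by group]; exact mem_upperCent_zero.mpr rfl⟩
  | succ m ih =>
    intro x hx
    obtain ⟨hxS, hxc⟩ := mem_upperCent_succ.mp hx
    exact mem_upperCent_succ.mpr ⟨hxS, fun g hg => ih (hxc g hg)⟩

theorem upperCent_mono (h1 : (1 : G) ∈ S) {n m : ℕ} (h : n ≤ m) :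
    upperCent S n ⊆ upperCent S m := by
  induction h with
  | refl => exact subset_rfl
  | step h ih => exact ih.trans (upperCent_mono_succ h1 _)

end Generic

section Env

variable {A : Set G}

/-- Elements of `E_{k+1}` conjugate (both ways) each `C^n(E_k)`, `n ≤ k+1`, into itself. -/
def Apred (A : Set G) (k : ℕ) : Prop :=
  ∀ g ∈ env A (k + 1), ∀ n, n ≤ k + 1 → ∀ c ∈ iterCent (env A k) A n,
    g * c * g⁻¹ ∈ iterCent (env A k) A n ∧ g⁻¹ * c * g ∈ iterCent (env A k) A n

theorem conj_iff_of_two_sided {C : Set G} {g : G}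
    (h2 : ∀ c ∈ C, g * c * g⁻¹ ∈ C ∧ g⁻¹ * c * g ∈ C) (u : G) :
    (g * u * g⁻¹ ∈ C ↔ u ∈ C) ∧ (g⁻¹ * u * g ∈ C ↔ u ∈ C) := by
  constructor
  · constructor
    · intro h
      have := (h2 _ h).2
      rwa [show g⁻¹ * (g * u * g⁻¹) * g = u by group] at this
    · exact fun h => (h2 u h).1
  · constructor
    · intro h
      have := (h2 _ h).1
      rwa [show g * (g⁻¹ * u * g) * g⁻¹ = u by group] at this
    · exact fun h => (h2 u h).2

theorem Apred_of_low {k : ℕ} (hSG : IsSG (env A k)) (hH1 : A ⊆ env A (k + 1))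
    (hlow : ∀ g ∈ env A (k + 1), ∀ m, m ≤ k → ∀ c ∈ iterCent (env A k) A m,
      g * c * g⁻¹ ∈ iterCent (env A k) A m ∧ g⁻¹ * c * g ∈ iterCent (env A k) A m) :
    Apred A k := by
  obtain ⟨h1, hmul, hinv⟩ := hSG
  intro g hg n hn c hc
  rcases Nat.lt_or_ge n (k + 1) with hlt | hge
  · exact hlow g hg n (Nat.lt_succ_iff.mp hlt) c hc
  have hnk : n = k + 1 := le_antisymm hn hge
  subst hnk
  obtain ⟨hgE, hgC⟩ := mem_env_succ.mp hg
  obtain ⟨hcE, hcnorm, hccomm⟩ := mem_iterCent_succ.mp hc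
  have hcl := iterCent_closed (A := A) ⟨h1, hmul, hinv⟩
  constructor
  · -- forward conjugation
    have h1' : ⁅g, c⁆ ∈ iterCent (env A k) A k := hgC c hc
    have h2 : ⁅g, c⁆ ∈ iterCent (env A k) A (k + 1) :=
      iterCent_mono_succ ⟨h1, hmul, hinv⟩ k h1'
    rw [show g * c * g⁻¹ = ⁅g, c⁆ * c by simp only [commutatorElement_def]; group]
    exact (hcl (k + 1)).2 _ h2 _ hc
  · -- backward conjugation
    rw [mem_iterCent_succ]
    refine ⟨hmul _ (hmul _ (hinv g hgE) _ hcE) _ hgE, fun m hm h hh => ?_, fun a ha => ?_⟩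
    · have hgh : g * h * g⁻¹ ∈ env A k := hmul _ (hmul _ hgE _ hh) _ (hinv g hgE)
      have key1 := hcnorm m hm _ hgh
      have giff := fun u => conj_iff_of_two_sided (fun c hc => hlow g hg m hm c hc) u
      rw [show g⁻¹ * c * g * h * (g⁻¹ * c * g)⁻¹ = g⁻¹ * (c * (g * h * g⁻¹) * c⁻¹) * g by group,
        (giff _).2, key1, (giff h).1]
    · have t1 : ⁅g, c⁆ ∈ iterCent (env A k) A k := hgC c hc
      have t2 : g⁻¹ * ⁅g, c⁆ * g ∈ iterCent (env A k) A k := (hlow g hg k le_rfl _ t1).2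
      have t3 : a * (g⁻¹ * ⁅g, c⁆ * g) * a⁻¹ ∈ iterCent (env A k) A k :=
        (hlow a (hH1 ha) k le_rfl _ t2).1
      have t4 : ⁅c, a⁆ ∈ iterCent (env A k) A k := hccomm a ha
      have t5 : ⁅c, a⁆ * (a * (g⁻¹ * ⁅g, c⁆ * g) * a⁻¹) ∈ iterCent (env A k) A k :=
        (hcl k).2 _ t4 _ t3
      have t6 : g * (⁅c, a⁆ * (a * (g⁻¹ * ⁅g, c⁆ * g) * a⁻¹)) * g⁻¹ ∈ iterCent (env A k) A k :=
        (hlow g hg k le_rfl _ t5).1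
      have t7 : ⁅g, c⁆⁻¹ ∈ iterCent (env A k) A k := (hcl k).1 _ t1
      have t8 := (hcl k).2 _ t7 _ t6
      have t9 := (hlow g hg k le_rfl _ t8).2
      rw [show ⁅g⁻¹ * c * g, a⁆ =
          g⁻¹ * (⁅g, c⁆⁻¹ * (g * (⁅c, a⁆ * (a * (g⁻¹ * ⁅g, c⁆ * g) * a⁻¹)) * g⁻¹)) * g by
        simp only [commutatorElement_def]; group]
      exact t9

theorem env_succ_isSG {k : ℕ} (hSG : IsSG (env A k)) (hA : Apred A k) :
    IsSG (env A (k + 1)) := by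
  obtain ⟨h1, hmul, hinv⟩ := hSG
  have hcl := iterCent_closed (A := A) ⟨h1, hmul, hinv⟩
  refine ⟨?_, ?_, ?_⟩
  · exact mem_env_succ.mpr ⟨h1, fun c hc => by
      rw [show ⁅(1 : G), c⁆ = 1 by group]; exact one_mem_iterCent h1 k⟩
  · intro x hx y hy
    obtain ⟨hxE, hxC⟩ := mem_env_succ.mp hx
    obtain ⟨hyE, hyC⟩ := mem_env_succ.mp hy
    refine mem_env_succ.mpr ⟨hmul _ hxE _ hyE, fun c hc => ?_⟩
    have hu : ⁅y, c⁆ ∈ iterCent (env A k) A k := hyC c hc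
    have h2 : x * ⁅y, c⁆ * x⁻¹ ∈ iterCent (env A k) A k :=
      (hA x hx k (Nat.le_succ k) _ hu).1
    rw [show ⁅x * y, c⁆ = x * ⁅y, c⁆ * x⁻¹ * ⁅x, c⁆ by
      simp only [commutatorElement_def]; group]
    exact (hcl k).2 _ h2 _ (hxC c hc)
  · intro x hx
    obtain ⟨hxE, hxC⟩ := mem_env_succ.mp hx
    refine mem_env_succ.mpr ⟨hinv x hxE, fun c hc => ?_⟩
    have hv : ⁅x, c⁆⁻¹ ∈ iterCent (env A k) A k := (hcl k).1 _ (hxC c hc)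
    have h2 := (hA x hx k (Nat.le_succ k) _ hv).2
    rw [show ⁅x⁻¹, c⁆ = x⁻¹ * ⁅x, c⁆⁻¹ * x by simp only [commutatorElement_def]; group]
    exact h2

theorem A_sub_env_succ {k : ℕ} (hSG : IsSG (env A k)) (hH : A ⊆ env A k) :
    A ⊆ env A (k + 1) := by
  intro a ha
  refine mem_env_succ.mpr ⟨hH ha, fun c hc => ?_⟩
  obtain ⟨-, -, hccomm⟩ := mem_iterCent_succ.mp hc
  have := (iterCent_closed (A := A) hSG k).1 _ (hccomm a ha)
  rw [show ⁅a, c⁆ = ⁅c, a⁆⁻¹ by simp only [commutatorElement_def]; group]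
  exact this

theorem iterCent_subset_env_succ {k : ℕ} (hSG : IsSG (env A k)) :
    ∀ n, n ≤ k → iterCent (env A k) A n ⊆ env A (k + 1) := by
  intro n hn x hx
  have hx' : x ∈ iterCent (env A k) A k := iterCent_mono hSG hn hx
  have hxS : x ∈ env A k := iterCent_subset hSG.1 k hx'
  refine mem_env_succ.mpr ⟨hxS, fun c hc => ?_⟩
  obtain ⟨hcE, hcnorm, hccomm⟩ := mem_iterCent_succ.mp hc
  have hxi : x⁻¹ ∈ iterCent (env A k) A k := (iterCent_closed hSG k).1 _ hx'
  have h2 : c * x⁻¹ * c⁻¹ ∈ iterCent (env A k) A k :=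
    (hcnorm k le_rfl _ (hSG.2.2 x hxS)).mpr hxi
  rw [show ⁅x, c⁆ = x * (c * x⁻¹ * c⁻¹) by simp only [commutatorElement_def]; group]
  exact (iterCent_closed hSG k).2 _ hx' _ h2

theorem conj_mem_iff_of_isSG {S : Set G} (hS : IsSG S) {x : G} (hx : x ∈ S) (h : G) :
    x * h * x⁻¹ ∈ S ↔ h ∈ S := by
  obtain ⟨h1, hmul, hinv⟩ := hS
  constructor
  · intro hm
    have := hmul _ (hmul _ (hinv x hx) _ hm) _ hx
    rwa [show x⁻¹ * (x * h * x⁻¹) * x = h by group] at this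
  · intro hm; exact hmul _ (hmul _ hx _ hm) _ (hinv x hx)

theorem St_succ {k : ℕ} (hSGk : IsSG (env A k)) (hSG1 : IsSG (env A (k + 1)))
    (hH1 : A ⊆ env A (k + 1)) (hA : Apred A k) :
    ∀ n, n ≤ k + 1 →
      iterCent (env A (k + 1)) A n = iterCent (env A k) A n ∩ env A (k + 1) := by
  intro n
  induction n using Nat.strong_induction_on with
  | _ n ih =>
    intro hn
    match n, hn with
    | 0, _ =>
      ext x
      simp only [mem_iterCent_zero, Set.mem_inter_iff]
      constructor
      · rintro rfl; exact ⟨rfl, hSG1.1⟩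
      · exact fun h => h.1
    | (m + 1), hn =>
      ext x
      constructor
      · intro hx
        obtain ⟨hxE1, hxnorm, hxcomm⟩ := mem_iterCent_succ.mp hx
        have hxEk : x ∈ env A k := (mem_env_succ.mp hxE1).1
        refine ⟨mem_iterCent_succ.mpr ⟨hxEk, fun m' hm' h hh => ?_, fun a ha => ?_⟩, hxE1⟩
        · exact (conj_iff_of_two_sided
            (fun c hc => hA x hxE1 m' (le_trans (le_trans hm' (Nat.le_succ m)) hn) c hc) h).1
        · have := hxcomm a ha
          rw [ih m (Nat.lt_succ_self m) (le_trans (Nat.le_succ m) hn)] at this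
          exact this.1
      · rintro ⟨hxk, hx1⟩
        obtain ⟨hxE, hxnorm, hxcomm⟩ := mem_iterCent_succ.mp hxk
        refine mem_iterCent_succ.mpr ⟨hx1, fun m' hm' h hh => ?_, fun a ha => ?_⟩
        · have hhk : h ∈ env A k := (mem_env_succ.mp hh).1
          rw [ih m' (Nat.lt_succ_of_le hm') (le_trans (le_trans hm' (Nat.le_succ m)) hn)]
          simp only [Set.mem_inter_iff]
          rw [hxnorm m' hm' h hhk, conj_mem_iff_of_isSG hSG1 hx1 h]
        · rw [ih m (Nat.lt_succ_self m) (le_trans (Nat.le_succ m) hn)]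
          refine ⟨hxcomm a ha, ?_⟩
          have haE : a ∈ env A (k + 1) := hH1 ha
          obtain ⟨-, hmul, hinv⟩ := hSG1
          exact hmul _ (hmul _ (hmul _ hx1 _ haE) _ (hinv x hx1)) _ (hinv a haE)

theorem master (A : Set G) : ∀ k, IsSG (env A k) ∧ A ⊆ env A k ∧ Apred A k ∧
    (∀ n, n ≤ k + 1 →
      iterCent (env A (k + 1)) A n = iterCent (env A k) A n ∩ env A (k + 1)) ∧
    (∀ n, n ≤ k → iterCent (env A (k + 1)) A n = iterCent (env A k) A n) := by
  have St' : ∀ k, IsSG (env A k) →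
      (∀ n, n ≤ k + 1 →
        iterCent (env A (k + 1)) A n = iterCent (env A k) A n ∩ env A (k + 1)) →
      ∀ n, n ≤ k → iterCent (env A (k + 1)) A n = iterCent (env A k) A n := by
    intro k hSG hSt n hn
    rw [hSt n (le_trans hn (Nat.le_succ k))]
    exact Set.inter_eq_left.mpr (iterCent_subset_env_succ hSG n hn)
  intro k
  induction k with
  | zero =>
    have hSG0 : IsSG (env A 0) :=
      ⟨mem_env_zero, fun _ _ _ _ => mem_env_zero, fun _ _ => mem_env_zero⟩
    have hH0 : A ⊆ env A 0 := fun a _ => mem_env_zero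
    have hH1 : A ⊆ env A 1 := A_sub_env_succ hSG0 hH0
    have hlow : ∀ g ∈ env A 1, ∀ m, m ≤ 0 → ∀ c ∈ iterCent (env A 0) A m,
        g * c * g⁻¹ ∈ iterCent (env A 0) A m ∧ g⁻¹ * c * g ∈ iterCent (env A 0) A m := by
      intro g hg m hm c hc
      have hm0 : m = 0 := Nat.le_zero.mp hm
      subst hm0
      rw [mem_iterCent_zero] at hc
      subst hc
      constructor <;> (rw [mem_iterCent_zero]; group)
    have hA := Apred_of_low hSG0 hH1 hlow
    have hSG1 := env_succ_isSG hSG0 hA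
    have hSt := St_succ hSG0 hSG1 hH1 hA
    exact ⟨hSG0, hH0, hA, hSt, St' 0 hSG0 hSt⟩
  | succ k ihk =>
    obtain ⟨hSGk, hHk, hAk, hStk, hStk'⟩ := ihk
    have hSG1 : IsSG (env A (k + 1)) := env_succ_isSG hSGk hAk
    have hH1 : A ⊆ env A (k + 1) := A_sub_env_succ hSGk hHk
    have hH2 : A ⊆ env A (k + 2) := A_sub_env_succ hSG1 hH1
    have hlow : ∀ g ∈ env A (k + 2), ∀ m, m ≤ k + 1 → ∀ c ∈ iterCent (env A (k + 1)) A m,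
        g * c * g⁻¹ ∈ iterCent (env A (k + 1)) A m ∧
        g⁻¹ * c * g ∈ iterCent (env A (k + 1)) A m := by
      intro g hg m hm c hc
      rw [hStk m hm] at hc
      have hgE1 : g ∈ env A (k + 1) := (mem_env_succ.mp hg).1
      have c1 := hAk g hgE1 m hm c hc.1
      obtain ⟨-, hmul, hinv⟩ := hSG1
      constructor
      · rw [hStk m hm]
        exact ⟨c1.1, hmul _ (hmul _ hgE1 _ hc.2) _ (hinv g hgE1)⟩
      · rw [hStk m hm]
        exact ⟨c1.2, hmul _ (hmul _ (hinv g hgE1) _ hc.2) _ hgE1⟩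
    have hA1 := Apred_of_low hSG1 hH2 hlow
    have hSG2 := env_succ_isSG hSG1 hA1
    have hSt := St_succ hSG1 hSG2 hH2 hA1
    exact ⟨hSG1, hH1, hA1, hSt, St' (k + 1) hSG1 hSt⟩

end Env

section Final

variable {A : Set G}

theorem env_conj_iff (A : Set G) (k : ℕ) : ∀ z ∈ env A k, ∀ n, n < k → ∀ c : G,
    (z * c * z⁻¹ ∈ iterCent (env A k) A n ↔ c ∈ iterCent (env A k) A n) := by
  intro z hz n hnk c
  cases k with
  | zero => omega
  | succ k =>
    obtain ⟨-, -, hAk, -, hSt'⟩ := master A k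
    rw [hSt' n (Nat.lt_succ_iff.mp hnk)]
    exact (conj_iff_of_two_sided (fun c hc => hAk z hz n (by omega) c hc) c).1

theorem upperCent_subset_iterCent (A : Set G) (k : ℕ) :
    ∀ m, m ≤ k → upperCent (env A k) m ⊆ iterCent (env A k) A m := by
  intro m
  induction m with
  | zero =>
    intro _ x hx
    rw [mem_upperCent_zero] at hx
    exact mem_iterCent_zero.mpr hx
  | succ m ih =>
    intro hm x hx
    obtain ⟨hxE, hxcomm⟩ := mem_upperCent_succ.mp hx
    refine mem_iterCent_succ.mpr ⟨hxE, fun n hn h hh => ?_, fun a ha => ?_⟩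
    · exact env_conj_iff A k x hxE n (by omega) h
    · have haE : a ∈ env A k := (master A k).2.1 ha
      exact ih (le_trans (Nat.le_succ m) hm) (hxcomm a haE)

theorem upperCent_subset_env_succ (A : Set G) (k : ℕ) :
    upperCent (env A k) k ⊆ env A (k + 1) := by
  cases k with
  | zero =>
    intro x hx
    rw [mem_upperCent_zero] at hx
    subst hx
    exact mem_env_succ.mpr ⟨mem_env_zero, fun c hc => by
      rw [show ⁅(1 : G), c⁆ = 1 by group]
      exact mem_iterCent_zero.mpr rfl⟩
  | succ k =>
    intro x hx
    obtain ⟨hxE, hxcomm⟩ := mem_upperCent_succ.mp hx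
    have hSGk1 := (master A (k + 1)).1
    refine mem_env_succ.mpr ⟨hxE, fun c hc => ?_⟩
    have hcE : c ∈ env A (k + 1) := iterCent_subset hSGk1.1 _ hc
    have h2 : ⁅x, c⁆ ∈ upperCent (env A (k + 1)) k := hxcomm c hcE
    have h3 := upperCent_subset_iterCent A (k + 1) k (Nat.le_succ k) h2
    exact iterCent_mono hSGk1 (Nat.le_succ k) h3

theorem upperCent_env_step_aux (A : Set G) (k : ℕ) :
    ∀ m, m ≤ k → upperCent (env A k) m ⊆ upperCent (env A (k + 1)) m := by
  intro m
  induction m with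
  | zero =>
    intro _ x hx
    rw [mem_upperCent_zero] at hx
    exact mem_upperCent_zero.mpr hx
  | succ m ih =>
    intro hm x hx
    obtain ⟨hxE, hxcomm⟩ := mem_upperCent_succ.mp hx
    have hx1 : x ∈ env A (k + 1) :=
      upperCent_subset_env_succ A k (upperCent_mono (master A k).1.1 hm hx)
    refine mem_upperCent_succ.mpr ⟨hx1, fun g hg => ?_⟩
    exact ih (by omega) (hxcomm g (mem_env_succ.mp hg).1)

theorem upperCent_env_step (A : Set G) (k : ℕ) :
    upperCent (env A k) k ⊆ upperCent (env A (k + 1)) (k + 1) := by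
  intro x hx
  have hx1 : x ∈ env A (k + 1) := upperCent_subset_env_succ A k hx
  refine mem_upperCent_succ.mpr ⟨hx1, fun g hg => ?_⟩
  cases k with
  | zero =>
    rw [mem_upperCent_zero] at hx
    subst hx
    rw [show ⁅(1 : G), g⁆ = 1 by group]
    exact mem_upperCent_zero.mpr rfl
  | succ k =>
    obtain ⟨hxE, hxcomm⟩ := mem_upperCent_succ.mp hx
    have h2 := hxcomm g (mem_env_succ.mp hg).1
    have h3 := upperCent_env_step_aux A (k + 1) k (Nat.le_succ k) h2
    exact upperCent_mono (env_succ_isSG (master A (k + 1)).1 (master A (k + 1)).2.2.1).1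
      (Nat.le_succ k) h3

end Final

end BryantAux

/-- For `i ≤ j`, `Z_i(E_i(H)) ≤ Z_j(E_j(H))`. -/
theorem upperCent_env_mono {G : Type*} [Group G] (H : Subgroup G) (i j : ℕ) (hij : i ≤ j) :
    upperCent (env (H : Set G) i) i ⊆ upperCent (env (H : Set G) j) j := by
  induction j, hij using Nat.le_induction with
  | base => exact subset_rfl
  | succ j _ ih => exact ih.trans (BryantAux.upperCent_env_step (H : Set G) j)
end

section
/- Let G be a group, H a subgroup of G, and i ≤ k natural numbers. Then C_{E_k(H)}^{i+1}(H) = {x ∈ E_k(H) : [x,h] ∈ Z_i(E_k(H)) for all h ∈ H}. -/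
open scoped commutatorElement

section Aux

variable {G : Type*} [Group G]

/-- A set that is closed under the group operations. -/
def SubSet (S : Set G) : Prop :=
  (1 : G) ∈ S ∧ (∀ a ∈ S, ∀ b ∈ S, a * b ∈ S) ∧ ∀ a ∈ S, a⁻¹ ∈ S

lemma SubSet.comm_mem {S : Set G} (hS : SubSet S) {a b : G} (ha : a ∈ S) (hb : b ∈ S) :
    ⁅a, b⁆ ∈ S := by
  rw [commutatorElement_def]
  exact hS.2.1 _ (hS.2.1 _ (hS.2.1 _ ha _ hb) _ (hS.2.2 _ ha)) _ (hS.2.2 _ hb)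

lemma upperCent_subset {S : Set G} (h1 : (1 : G) ∈ S) : ∀ n, upperCent S n ⊆ S
  | 0 => by intro x hx; rw [upperCent] at hx; rwa [Set.mem_singleton_iff.mp hx]
  | n + 1 => by intro x hx; exact hx.1

lemma one_mem_upperCent {S : Set G} (h1 : (1 : G) ∈ S) : ∀ n, (1 : G) ∈ upperCent S n
  | 0 => rfl
  | n + 1 => ⟨h1, fun g _ => by simpa using one_mem_upperCent h1 n⟩

lemma upperCent_conj {S : Set G} (hS : SubSet S) :
    ∀ n, ∀ g ∈ S, ∀ z ∈ upperCent S n, g * z * g⁻¹ ∈ upperCent S n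
  | 0 => by
      intro g hg z hz
      rw [upperCent] at hz ⊢
      rw [Set.mem_singleton_iff.mp hz]; simp
  | n + 1 => by
      intro g hg z hz
      refine ⟨hS.2.1 _ (hS.2.1 _ hg _ hz.1) _ (hS.2.2 _ hg), fun s hs => ?_⟩
      have key : ⁅g * z * g⁻¹, s⁆ = g * ⁅z, g⁻¹ * s * g⁆ * g⁻¹ := by
        simp only [commutatorElement_def]; group
      rw [key]
      exact upperCent_conj hS n g hg _
        (hz.2 _ (hS.2.1 _ (hS.2.1 _ (hS.2.2 _ hg) _ hs) _ hg))

lemma upperCent_mul {S : Set G} (hS : SubSet S) :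
    ∀ n, ∀ x ∈ upperCent S n, ∀ y ∈ upperCent S n, x * y ∈ upperCent S n
  | 0 => by
      intro x hx y hy
      rw [upperCent] at hx hy ⊢
      rw [Set.mem_singleton_iff.mp hx, Set.mem_singleton_iff.mp hy]; simp
  | n + 1 => by
      intro x hx y hy
      refine ⟨hS.2.1 _ hx.1 _ hy.1, fun s hs => ?_⟩
      have key : ⁅x * y, s⁆ = (x * ⁅y, s⁆ * x⁻¹) * ⁅x, s⁆ := by
        simp only [commutatorElement_def]; group
      rw [key]
      exact upperCent_mul hS n _ (upperCent_conj hS n x hx.1 _ (hy.2 s hs)) _ (hx.2 s hs)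

lemma upperCent_inv {S : Set G} (hS : SubSet S) :
    ∀ n, ∀ x ∈ upperCent S n, x⁻¹ ∈ upperCent S n
  | 0 => by
      intro x hx
      rw [upperCent] at hx ⊢
      rw [Set.mem_singleton_iff.mp hx]; simp
  | n + 1 => by
      intro x hx
      refine ⟨hS.2.2 _ hx.1, fun s hs => ?_⟩
      have key : ⁅x⁻¹, s⁆ = x⁻¹ * ⁅x, s⁆⁻¹ * x := by
        simp only [commutatorElement_def]; group
      rw [key]
      have h1 : ⁅x, s⁆⁻¹ ∈ upperCent S n := upperCent_inv hS n _ (hx.2 s hs)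
      have := upperCent_conj hS n x⁻¹ (hS.2.2 _ hx.1) _ h1
      simpa using this

/-- Membership passes down the upper central series of a smaller subgroup-set. -/
lemma upperCent_inter {S T : Set G} (hT : SubSet T) (hTS : T ⊆ S) :
    ∀ n, ∀ z ∈ upperCent S n, z ∈ T → z ∈ upperCent T n
  | 0 => fun z hz _ => hz
  | n + 1 => fun z hz hzT =>
      ⟨hzT, fun t ht => upperCent_inter hT hTS n _ (hz.2 t (hTS ht)) (hT.comm_mem hzT ht)⟩

lemma iterCent_subset {S A : Set G} (h1 : (1 : G) ∈ S) : ∀ n, iterCent S A n ⊆ S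
  | 0 => by
      intro x hx
      rw [iterCent] at hx
      rwa [Set.mem_singleton_iff.mp hx]
  | n + 1 => by
      intro x hx
      rw [iterCent] at hx
      exact hx.1

lemma one_mem_iterCent {S A : Set G} (h1 : (1 : G) ∈ S) : ∀ n, (1 : G) ∈ iterCent S A n
  | 0 => by rw [iterCent]; rfl
  | n + 1 => by
      rw [iterCent]
      exact ⟨h1, fun m _ h hh => by simp, fun a _ => by
        simpa using one_mem_iterCent (A := A) h1 n⟩

lemma iterCent_inv {S A : Set G} (hS : SubSet S) (hAS : A ⊆ S) :
    ∀ n, ∀ x ∈ iterCent S A n, x⁻¹ ∈ iterCent S A n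
  | 0 => by
      intro x hx
      rw [iterCent] at hx ⊢
      rw [Set.mem_singleton_iff.mp hx]; simp
  | n + 1 => by
      intro x hx
      rw [iterCent] at hx ⊢
      obtain ⟨hxS, hxc, hxa⟩ := hx
      refine ⟨hS.2.2 _ hxS, ?_, ?_⟩
      · intro m hm h hh
        have hmem : x⁻¹ * h * x ∈ S :=
          hS.2.1 _ (hS.2.1 _ (hS.2.2 _ hxS) _ hh) _ hxS
        have := hxc m hm (x⁻¹ * h * x) hmem
        rw [show x * (x⁻¹ * h * x) * x⁻¹ = h by group] at this
        rw [inv_inv]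
        exact this.symm
      · intro a ha
        have h1 : ⁅x, a⁆⁻¹ ∈ iterCent S A n := iterCent_inv hS hAS n _ (hxa a ha)
        have key : ⁅x⁻¹, a⁆ = x⁻¹ * ⁅x, a⁆⁻¹ * x := by
          simp only [commutatorElement_def]; group
        have hmem : x⁻¹ * ⁅x, a⁆⁻¹ * x ∈ S :=
          hS.2.1 _ (hS.2.1 _ (hS.2.2 _ hxS) _ (iterCent_subset hS.1 n h1)) _ hxS
        rw [key]
        exact (hxc n le_rfl _ hmem).mp <| by
          rw [show x * (x⁻¹ * ⁅x, a⁆⁻¹ * x) * x⁻¹ = ⁅x, a⁆⁻¹ by group]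
          exact h1

lemma upperCent_conj_iff {S : Set G} (hS : SubSet S) {m : ℕ} {x h : G}
    (hx : x ∈ S) (hh : h ∈ S) :
    x * h * x⁻¹ ∈ upperCent S m ↔ h ∈ upperCent S m := by
  constructor
  · intro hmem
    have := upperCent_conj hS m x⁻¹ (hS.2.2 _ hx) _ hmem
    rwa [show x⁻¹ * (x * h * x⁻¹) * x⁻¹⁻¹ = h by group] at this
  · exact fun hmem => upperCent_conj hS m x hx _ hmem

/-- The main inductive lemma: each `E_k(H)` is a subgroup-set containing `H`, and inside it
the iterated centralizers of `H` agree with the upper central series up to level `k`. -/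
lemma env_main (H : Subgroup G) : ∀ k : ℕ,
    SubSet (env (H : Set G) k) ∧ (H : Set G) ⊆ env (H : Set G) k ∧
      ∀ n ≤ k, iterCent (env (H : Set G) k) (H : Set G) n = upperCent (env (H : Set G) k) n
  | 0 => by
      refine ⟨⟨trivial, fun _ _ _ _ => trivial, fun _ _ => trivial⟩,
        fun x _ => trivial, fun n hn => ?_⟩
      interval_cases n
      rw [iterCent, upperCent]
  | k + 1 => by
      obtain ⟨hE, hHE, hC⟩ := env_main H k
      set E : Set G := env (H : Set G) k with hEdef
      set E' : Set G := env (H : Set G) (k + 1) with hE'def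
      have hmemE' : ∀ g : G, g ∈ E' ↔ g ∈ E ∧
          ∀ c ∈ iterCent E (H : Set G) (k + 1), ⁅g, c⁆ ∈ iterCent E (H : Set G) k := by
        intro g; rw [hE'def, env]; rfl
      have hsub : E' ⊆ E := fun g hg => ((hmemE' g).mp hg).1
      have hCk : iterCent E (H : Set G) k = upperCent E k := hC k le_rfl
      -- E' is a subgroup-set
      have hE' : SubSet E' := by
        refine ⟨?_, ?_, ?_⟩
        · exact (hmemE' 1).mpr ⟨hE.1, fun c hc => by
            simpa using one_mem_iterCent (A := (H : Set G)) hE.1 k⟩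
        · intro a ha b hb
          obtain ⟨haE, hac⟩ := (hmemE' a).mp ha
          obtain ⟨hbE, hbc⟩ := (hmemE' b).mp hb
          refine (hmemE' (a * b)).mpr ⟨hE.2.1 _ haE _ hbE, fun c hc => ?_⟩
          have key : ⁅a * b, c⁆ = (a * ⁅b, c⁆ * a⁻¹) * ⁅a, c⁆ := by
            simp only [commutatorElement_def]; group
          rw [hCk] at hac hbc ⊢
          rw [key]
          exact upperCent_mul hE k _ (upperCent_conj hE k a haE _ (hbc c hc)) _ (hac c hc)
        · intro a ha
          obtain ⟨haE, hac⟩ := (hmemE' a).mp ha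
          refine (hmemE' a⁻¹).mpr ⟨hE.2.2 _ haE, fun c hc => ?_⟩
          have key : ⁅a⁻¹, c⁆ = a⁻¹ * ⁅a, c⁆⁻¹ * a := by
            simp only [commutatorElement_def]; group
          rw [hCk] at hac ⊢
          rw [key]
          have := upperCent_conj hE k a⁻¹ (hE.2.2 _ haE) _ (upperCent_inv hE k _ (hac c hc))
          simpa using this
      -- H ⊆ E'
      have hHE' : (H : Set G) ⊆ E' := by
        intro h hh
        refine (hmemE' h).mpr ⟨hHE hh, fun c hc => ?_⟩
        rw [iterCent] at hc
        have := hc.2.2 h hh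
        rw [← commutatorElement_inv]
        exact iterCent_inv hE hHE k _ this
      -- monotonicity of iterated centralizers
      have mono : ∀ n, n ≤ k + 1 →
          ∀ x ∈ iterCent E' (H : Set G) n, x ∈ iterCent E (H : Set G) n := by
        intro n
        induction n with
        | zero => intro _ x hx; rw [iterCent] at hx ⊢; exact hx
        | succ n ihn =>
          intro hn x hx
          rw [iterCent] at hx ⊢
          obtain ⟨hxE', hxc, hxa⟩ := hx
          refine ⟨hsub hxE', ?_, fun a ha => ihn (by omega) _ (hxa a ha)⟩
          intro m hm h hh
          rw [hC m (by omega)]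
          exact upperCent_conj_iff hE (hsub hxE') hh
      -- the centralizer–center identification at level k+1
      have key : ∀ n, n ≤ k + 1 → ∀ m ≤ n,
          iterCent E' (H : Set G) m = upperCent E' m := by
        intro n
        induction n with
        | zero =>
          intro _ m hm
          interval_cases m
          rw [iterCent, upperCent]
        | succ n ihn =>
          intro hn m hm
          rcases Nat.lt_or_ge m (n + 1) with hml | hmg
          · exact ihn (by omega) m (by omega)
          have hmeq : m = n + 1 := le_antisymm hm hmg
          subst hmeq
          apply Set.eq_of_subset_of_subset
          · -- C^{n+1}(E') ⊆ Z_{n+1}(E')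
            intro x hx
            have hxE' : x ∈ E' := by rw [iterCent] at hx; exact hx.1
            refine ⟨hxE', fun g hg => ?_⟩
            rcases Nat.lt_or_ge (n + 1) (k + 1) with h1 | h1
            · -- n + 1 ≤ k
              have hxE : x ∈ iterCent E (H : Set G) (n + 1) := mono (n + 1) (by omega) x hx
              rw [hC (n + 1) (by omega)] at hxE
              have : ⁅x, g⁆ ∈ upperCent E n := hxE.2 g (hsub hg)
              exact upperCent_inter hE' hsub n _ this (hE'.comm_mem hxE' hg)
            · -- n = k
              have hneq : n = k := by omega
              subst hneq
              have hxE : x ∈ iterCent E (H : Set G) (n + 1) := mono (n + 1) le_rfl x hx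
              have := ((hmemE' g).mp hg).2 x hxE
              rw [hCk] at this
              have h2 : ⁅x, g⁆ ∈ upperCent E n := by
                rw [← commutatorElement_inv]
                exact upperCent_inv hE n _ this
              exact upperCent_inter hE' hsub n _ h2 (hE'.comm_mem hxE' hg)
          · -- Z_{n+1}(E') ⊆ C^{n+1}(E')
            intro x hx
            obtain ⟨hxE', hxz⟩ := hx
            rw [iterCent]
            refine ⟨hxE', ?_, ?_⟩
            · intro m' hm' h hh
              rw [ihn (by omega) m' hm']
              exact upperCent_conj_iff hE' hxE' hh
            · intro a ha
              rw [ihn (by omega) n le_rfl]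
              exact hxz a (hHE' ha)
      exact ⟨hE', hHE', fun n hn => key (k + 1) le_rfl n hn⟩

end Aux

/-- For `i ≤ k`,
`C_(E_k(H))^(i+1)(H) = {x ∈ E_k(H) | [x, h] ∈ Z_i(E_k(H)) for all h ∈ H}`. -/
theorem iterCent_env_eq {G : Type*} [Group G] (H : Subgroup G) (i k : ℕ) (hik : i ≤ k) :
    iterCent (env (H : Set G) k) (H : Set G) (i + 1) =
      {x | x ∈ env (H : Set G) k ∧ ∀ h ∈ H, ⁅x, h⁆ ∈ upperCent (env (H : Set G) k) i} := by
  obtain ⟨hE, hHE, hC⟩ := env_main H k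
  apply Set.eq_of_subset_of_subset
  · intro x hx
    rw [iterCent] at hx
    obtain ⟨hxE, hxc, hxa⟩ := hx
    refine ⟨hxE, fun h hh => ?_⟩
    rw [← hC i hik]
    exact hxa h hh
  · rintro x ⟨hxE, hxz⟩
    rw [iterCent]
    refine ⟨hxE, ?_, ?_⟩
    · intro m hm h hh
      rw [hC m (le_trans hm hik)]
      exact upperCent_conj_iff hE hxE hh
    · intro a ha
      rw [hC i hik]
      exact hxz a ha
end

section
/- Let A ≤ B ≤ C be groups and k a natural number such that C_C^j(A) = Z_j(C) for all j ≤ k. Then: (i) C_C^j(A) = C_C^j(B) = Z_j(C) for all j ≤ k; (ii) C_B^j(A) = Z_j(B) = Z_j(C) ∩ B for all j ≤ k; and (iii) C_B^{k+1}(A) = C_C^{k+1}(A) ∩ B. -/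
open scoped commutatorElement

lemma upperCent_univ_conj_mem {G : Type*} [Group G] :
    ∀ (n : ℕ) (x g : G), g ∈ upperCent (Set.univ : Set G) n →
      x * g * x⁻¹ ∈ upperCent (Set.univ : Set G) n := by
  intro n
  induction n with
  | zero =>
    intro x g hg
    simp only [upperCent, Set.mem_singleton_iff] at *
    subst hg; simp
  | succ n ihn =>
    intro x g hg
    simp only [upperCent, Set.mem_setOf_eq] at hg ⊢
    refine ⟨trivial, fun h _ => ?_⟩
    have e : ⁅x * g * x⁻¹, h⁆ = x * ⁅g, x⁻¹ * h * x⁆ * x⁻¹ := by group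
    rw [e]
    exact ihn x _ (hg.2 _ trivial)

lemma upperCent_univ_conj_iff {G : Type*} [Group G] (n : ℕ) (x g : G) :
    x * g * x⁻¹ ∈ upperCent (Set.univ : Set G) n ↔ g ∈ upperCent (Set.univ : Set G) n := by
  constructor
  · intro hm
    have := upperCent_univ_conj_mem n x⁻¹ _ hm
    rwa [show x⁻¹ * (x * g * x⁻¹) * x⁻¹⁻¹ = g by group] at this
  · exact upperCent_univ_conj_mem n x g

/-- Let `A ≤ B ≤ C` be groups and `k` such that `C_C^j(A) = Z_j(C)` for all `j ≤ k`.
Then (i) `C_C^j(A) = C_C^j(B) = Z_j(C)` for `j ≤ k`;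
(ii) `C_B^j(A) = Z_j(B) = Z_j(C) ∩ B` for `j ≤ k`;
(iii) `C_B^(k+1)(A) = C_C^(k+1)(A) ∩ B`. -/
theorem iterCent_of_eq_upperCent {C : Type*} [Group C] (A B : Subgroup C) (hAB : A ≤ B)
    (k : ℕ) (h : ∀ j ≤ k, iterCent (Set.univ : Set C) (A : Set C) j =
      upperCent (Set.univ : Set C) j) :
    (∀ j ≤ k, iterCent (Set.univ : Set C) (A : Set C) j =
        iterCent (Set.univ : Set C) (B : Set C) j ∧
      iterCent (Set.univ : Set C) (B : Set C) j = upperCent (Set.univ : Set C) j) ∧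
    (∀ j ≤ k, iterCent (B : Set C) (A : Set C) j = upperCent (B : Set C) j ∧
      upperCent (B : Set C) j = upperCent (Set.univ : Set C) j ∩ (B : Set C)) ∧
    iterCent (B : Set C) (A : Set C) (k + 1) =
      iterCent (Set.univ : Set C) (A : Set C) (k + 1) ∩ (B : Set C) := by
  have hcommB : ∀ x a : C, x ∈ B → a ∈ B → ⁅x, a⁆ ∈ B := by
    intro x a hx ha
    rw [commutatorElement_def]
    exact mul_mem (mul_mem (mul_mem hx ha) (inv_mem hx)) (inv_mem ha)
  have hconjB : ∀ x g : C, x ∈ B → g ∈ B → x * g * x⁻¹ ∈ B := fun x g hx hg =>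
    mul_mem (mul_mem hx hg) (inv_mem hx)
  -- core: if commutators with A land in Z_j and j+1 ≤ k, then x ∈ Z_{j+1}
  have core : ∀ j, j + 1 ≤ k → ∀ x : C,
      (∀ a ∈ (A : Set C), ⁅x, a⁆ ∈ upperCent (Set.univ : Set C) j) →
      x ∈ upperCent (Set.univ : Set C) (j + 1) := by
    intro j hjk x hx
    rw [← h (j + 1) hjk]
    simp only [iterCent, Set.mem_setOf_eq]
    refine ⟨trivial, fun n hn g _ => ?_, fun a ha => ?_⟩
    · rw [h n (by omega)]
      exact upperCent_univ_conj_iff n x g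
    · rw [h j (by omega)]
      exact hx a ha
  have key : ∀ j, j ≤ k → iterCent (Set.univ : Set C) (B : Set C) j =
      upperCent (Set.univ : Set C) j ∧
      iterCent (B : Set C) (A : Set C) j = upperCent (Set.univ : Set C) j ∩ (B : Set C) ∧
      upperCent (B : Set C) j = upperCent (Set.univ : Set C) j ∩ (B : Set C) := by
    intro j
    induction j using Nat.strong_induction_on with
    | _ j ih =>
      intro hjk
      match j with
      | 0 =>
        have h0 : iterCent (Set.univ : Set C) (B : Set C) 0 = upperCent (Set.univ : Set C) 0 := by
          simp [iterCent, upperCent]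
        refine ⟨h0, ?_, ?_⟩ <;>
        · ext x
          simp only [iterCent, upperCent, Set.mem_singleton_iff, Set.mem_inter_iff]
          exact ⟨fun hx => ⟨hx, hx ▸ one_mem B⟩, fun hx => hx.1⟩
      | j + 1 =>
        have ihn : ∀ n, n ≤ j → _ := fun n hn => ih n (by omega) (by omega)
        constructor
        · -- iterCent univ B (j+1) = Z (j+1)
          ext x
          simp only [iterCent, Set.mem_setOf_eq, Set.mem_univ, true_and]
          constructor
          · rintro ⟨-, hc⟩
            exact core j hjk x fun a ha => by
              have := hc a (hAB ha)
              rwa [(ihn j le_rfl).1] at this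
          · intro hx
            have hx2 : ∀ g : C, ⁅x, g⁆ ∈ upperCent (Set.univ : Set C) j := by
              intro g
              exact hx.2 g trivial
            refine ⟨fun n hn g _ => ?_, fun b _ => ?_⟩
            · rw [(ihn n hn).1]
              exact upperCent_univ_conj_iff n x g
            · rw [(ihn j le_rfl).1]
              exact hx2 b
        constructor
        · -- iterCent B A (j+1) = Z (j+1) ∩ B
          ext x
          simp only [iterCent, Set.mem_setOf_eq, Set.mem_inter_iff]
          constructor
          · rintro ⟨hxB, -, hc⟩
            refine ⟨core j hjk x fun a ha => ?_, hxB⟩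
            have := hc a ha
            rw [(ihn j le_rfl).2.1] at this
            exact this.1
          · rintro ⟨hxZ, hxB⟩
            refine ⟨hxB, fun n hn g hg => ?_, fun a ha => ?_⟩
            · rw [(ihn n hn).2.1]
              simp only [Set.mem_inter_iff]
              constructor
              · rintro ⟨h1, -⟩
                exact ⟨(upperCent_univ_conj_iff n x g).mp h1, hg⟩
              · rintro ⟨h1, -⟩
                exact ⟨(upperCent_univ_conj_iff n x g).mpr h1, hconjB x g hxB hg⟩
            · rw [(ihn j le_rfl).2.1]
              exact ⟨hxZ.2 a trivial, hcommB x a hxB (hAB ha)⟩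
        · -- upperCent B (j+1) = Z (j+1) ∩ B
          ext x
          simp only [upperCent, Set.mem_setOf_eq, Set.mem_inter_iff]
          constructor
          · rintro ⟨hxB, hc⟩
            refine ⟨core j hjk x fun a ha => ?_, hxB⟩
            have := hc a (hAB ha)
            rw [show upperCent (B : Set C) j = _ from (ihn j le_rfl).2.2] at this
            exact this.1
          · rintro ⟨hxZ, hxB⟩
            refine ⟨hxB, fun g hg => ?_⟩
            rw [show upperCent (B : Set C) j = _ from (ihn j le_rfl).2.2]
            exact ⟨hxZ.2 g trivial, hcommB x g hxB hg⟩
  refine ⟨fun j hj => ⟨(h j hj).trans ((key j hj).1.symm), (key j hj).1⟩,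
    fun j hj => ⟨(key j hj).2.1.trans (key j hj).2.2.symm, (key j hj).2.2⟩, ?_⟩
  ext x
  simp only [iterCent, Set.mem_setOf_eq, Set.mem_inter_iff, Set.mem_univ, true_and]
  constructor
  · rintro ⟨hxB, -, hc⟩
    refine ⟨⟨fun n hn g _ => ?_, fun a ha => ?_⟩, hxB⟩
    · rw [h n hn]
      exact upperCent_univ_conj_iff n x g
    · rw [h k le_rfl]
      have := hc a ha
      rw [(key k le_rfl).2.1] at this
      exact this.1
  · rintro ⟨⟨-, hc⟩, hxB⟩
    refine ⟨hxB, fun n hn g hg => ?_, fun a ha => ?_⟩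
    · rw [(key n hn).2.1]
      simp only [Set.mem_inter_iff]
      constructor
      · rintro ⟨h1, -⟩
        exact ⟨(upperCent_univ_conj_iff n x g).mp h1, hg⟩
      · rintro ⟨h1, -⟩
        exact ⟨(upperCent_univ_conj_iff n x g).mpr h1, hconjB x g hxB hg⟩
    · rw [(key k le_rfl).2.1]
      have := hc a ha
      rw [h k le_rfl] at this
      exact ⟨this, hcommB x a hxB (hAB ha)⟩
end

section
/- Let F be a field, n a natural number, G a subgroup of the general linear group GL(n, F), and H a subgroup of G. Then the chain (E_k(H))_{k∈ℕ} stabilizes: there exists N ∈ ℕ such that E_k(H) = E_N(H) for all k ≥ N. -/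
open scoped commutatorElement

section GroupPart

variable {G : Type*} [Group G]

/-- A set that is a subgroup. -/
structure SGSet (S : Set G) : Prop where
  one_mem : (1 : G) ∈ S
  mul_mem : ∀ {a b : G}, a ∈ S → b ∈ S → a * b ∈ S
  inv_mem : ∀ {a : G}, a ∈ S → a⁻¹ ∈ S

theorem iterCent_zero (S A : Set G) : iterCent S A 0 = {1} := by rw [iterCent]

theorem iterCent_succ (S A : Set G) (k : ℕ) : iterCent S A (k + 1) =
    {x | x ∈ S ∧
      (∀ n, n ≤ k → ∀ h ∈ S, (x * h * x⁻¹ ∈ iterCent S A n ↔ h ∈ iterCent S A n)) ∧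
      ∀ a ∈ A, ⁅x, a⁆ ∈ iterCent S A k} := by rw [iterCent]

theorem mem_iterCent_succ {S A : Set G} {k : ℕ} {x : G} : x ∈ iterCent S A (k + 1) ↔
    (x ∈ S ∧
      (∀ n, n ≤ k → ∀ h ∈ S, (x * h * x⁻¹ ∈ iterCent S A n ↔ h ∈ iterCent S A n)) ∧
      ∀ a ∈ A, ⁅x, a⁆ ∈ iterCent S A k) := by rw [iterCent_succ]; rfl

variable {S A : Set G}

theorem iterCent_subset_s11 (hS : SGSet S) : ∀ j, iterCent S A j ⊆ S := by
  intro j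
  match j with
  | 0 =>
    rw [iterCent_zero]
    intro x hx
    rw [Set.mem_singleton_iff] at hx
    subst hx
    exact hS.one_mem
  | j + 1 => exact fun x hx => (mem_iterCent_succ.mp hx).1

theorem SG_iterCent (hS : SGSet S) : ∀ j, SGSet (iterCent S A j) := by
  intro j
  induction j with
  | zero =>
    rw [iterCent_zero]
    exact ⟨rfl, fun ha hb => by
        rw [Set.mem_singleton_iff] at *; rw [ha, hb, one_mul],
      fun ha => by rw [Set.mem_singleton_iff] at *; rw [ha, inv_one]⟩
  | succ j IH =>
    constructor
    · refine mem_iterCent_succ.mpr ⟨hS.one_mem, fun n hn h hh => by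
        rw [one_mul, inv_one, mul_one], fun a ha => ?_⟩
      rw [show ⁅(1 : G), a⁆ = 1 by group]
      exact IH.one_mem
    · intro x y hx hy
      obtain ⟨hx1, hx2, hx3⟩ := mem_iterCent_succ.mp hx
      obtain ⟨hy1, hy2, hy3⟩ := mem_iterCent_succ.mp hy
      refine mem_iterCent_succ.mpr ⟨hS.mul_mem hx1 hy1, fun n hn h hh => ?_, fun a ha => ?_⟩
      · have hyh : y * h * y⁻¹ ∈ S := hS.mul_mem (hS.mul_mem hy1 hh) (hS.inv_mem hy1)
        rw [show x * y * h * (x * y)⁻¹ = x * (y * h * y⁻¹) * x⁻¹ by group]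
        exact (hx2 n hn _ hyh).trans (hy2 n hn h hh)
      · have h1 : ⁅y, a⁆ ∈ iterCent S A j := hy3 a ha
        have h2 : x * ⁅y, a⁆ * x⁻¹ ∈ iterCent S A j :=
          (hx2 j le_rfl _ (iterCent_subset_s11 hS j h1)).mpr h1
        have h3 := IH.mul_mem h2 (hx3 a ha)
        rwa [show x * ⁅y, a⁆ * x⁻¹ * ⁅x, a⁆ = ⁅x * y, a⁆ by group] at h3
    · intro x hx
      obtain ⟨hx1, hx2, hx3⟩ := mem_iterCent_succ.mp hx
      refine mem_iterCent_succ.mpr ⟨hS.inv_mem hx1, fun n hn h hh => ?_, fun a ha => ?_⟩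
      · have hh' : x⁻¹ * h * x ∈ S := hS.mul_mem (hS.mul_mem (hS.inv_mem hx1) hh) hx1
        have := hx2 n hn _ hh'
        rw [show x * (x⁻¹ * h * x) * x⁻¹ = h by group] at this
        rw [inv_inv]
        exact this.symm
      · have h1 : ⁅x, a⁆⁻¹ ∈ iterCent S A j := IH.inv_mem (hx3 a ha)
        have hmem : x⁻¹ * ⁅x, a⁆⁻¹ * x ∈ S :=
          hS.mul_mem (hS.mul_mem (hS.inv_mem hx1) (iterCent_subset_s11 hS j h1)) hx1
        have := hx2 j le_rfl _ hmem
        rw [show x * (x⁻¹ * ⁅x, a⁆⁻¹ * x) * x⁻¹ = ⁅x, a⁆⁻¹ by group] at this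
        have h2 := this.mp h1
        rwa [show x⁻¹ * ⁅x, a⁆⁻¹ * x = ⁅x⁻¹, a⁆ by group] at h2

theorem iterCent_ascend (hS : SGSet S) : ∀ j, iterCent S A j ⊆ iterCent S A (j + 1) := by
  intro j
  induction j with
  | zero =>
    intro x hx
    rw [iterCent_zero, Set.mem_singleton_iff] at hx; subst hx
    exact (SG_iterCent hS 1).one_mem
  | succ j IH =>
    intro x hx
    have hxC := hx
    obtain ⟨hx1, hx2, hx3⟩ := mem_iterCent_succ.mp hx
    have C := SG_iterCent (A := A) hS (j + 1)
    refine mem_iterCent_succ.mpr ⟨hx1, fun n hn h hh => ?_, fun a ha => IH (hx3 a ha)⟩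
    by_cases hn' : n ≤ j
    · exact hx2 n hn' h hh
    · have : n = j + 1 := by omega
      subst this
      constructor
      · intro hmem
        have := C.mul_mem (C.mul_mem (C.inv_mem hxC) hmem) hxC
        rwa [show x⁻¹ * (x * h * x⁻¹) * x = h by group] at this
      · intro hmem
        exact C.mul_mem (C.mul_mem hxC hmem) (C.inv_mem hxC)

theorem normQ (hS : SGSet S) {C : Set G} (hCS : C ⊆ S) {x : G} (hx : x ∈ S) :
    (∀ h ∈ S, (x * h * x⁻¹ ∈ C ↔ h ∈ C)) ↔
      ((∀ d ∈ C, x * d * x⁻¹ ∈ C) ∧ (∀ d ∈ C, x⁻¹ * d * x ∈ C)) := by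
  constructor
  · intro P
    refine ⟨fun d hd => (P d (hCS hd)).mpr hd, fun d hd => ?_⟩
    have h' : x⁻¹ * d * x ∈ S := hS.mul_mem (hS.mul_mem (hS.inv_mem hx) (hCS hd)) hx
    have := P _ h'
    rw [show x * (x⁻¹ * d * x) * x⁻¹ = d by group] at this
    exact this.mp hd
  · rintro ⟨Q1, Q2⟩ h hh
    constructor
    · intro hmem
      have := Q2 _ hmem
      rwa [show x⁻¹ * (x * h * x⁻¹) * x = h by group] at this
    · exact fun hh' => Q1 h hh'

theorem env_zero (A : Set G) : env A 0 = Set.univ := by rw [env]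

theorem mem_env_succ {A : Set G} {k : ℕ} {g : G} : g ∈ env A (k + 1) ↔
    (g ∈ env A k ∧
      ∀ c ∈ iterCent (env A k) A (k + 1), ⁅g, c⁆ ∈ iterCent (env A k) A k) := by
  rw [env]; rfl

theorem env_antitone {A : Set G} : ∀ {k l : ℕ}, k ≤ l → env A l ⊆ env A k := by
  intro k l hkl
  induction l with
  | zero =>
    have : k = 0 := by omega
    subst this; exact subset_rfl
  | succ l IH =>
    rcases Nat.lt_or_ge k (l + 1) with h | h
    · exact fun x hx => IH (by omega) (mem_env_succ.mp hx).1
    · have : k = l + 1 := by omega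
      subst this; exact subset_rfl

end GroupPart

section AlgPart

open MvPolynomial

variable {F : Type*} [Field F] {n : ℕ} {G : Subgroup (Matrix.GeneralLinearGroup (Fin n) F)}

private theorem myeval {σ : Type*} (Q : σ → MvPolynomial σ F) (p : MvPolynomial σ F)
    (x : σ → F) : eval x (eval₂ C Q p) = eval (fun i => eval x (Q i)) p := by
  rw [eval_eval₂]
  have h : (eval x).comp (C : F →+* MvPolynomial σ F) = RingHom.id F := by
    ext a; simp
  rw [h, eval₂_id]

/-- The matrix of a group element. -/
def mat (g : G) : Matrix (Fin n) (Fin n) F :=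
  ((g : Matrix.GeneralLinearGroup (Fin n) F) : Matrix (Fin n) (Fin n) F)

theorem mat_mul (x y : G) : mat (x * y) = mat x * mat y := rfl

theorem mat_one : mat (1 : G) = 1 := rfl

theorem mat_injective : Function.Injective (mat (G := G)) := by
  intro x y h
  exact Subtype.ext (Units.ext h)

/-- coordinates: entries of `g` and of `g⁻¹`. -/
def phi (g : G) : Bool × Fin n × Fin n → F := fun bij =>
  if bij.1 then mat g bij.2.1 bij.2.2 else mat g⁻¹ bij.2.1 bij.2.2

theorem phi_true (g : G) (i j : Fin n) : phi g (true, i, j) = mat g i j := rfl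

theorem phi_false (g : G) (i j : Fin n) : phi g (false, i, j) = mat g⁻¹ i j := rfl

/-- Algebraic subsets of `G`: common zero sets of polynomials in entries of `g`, `g⁻¹`. -/
def Alg (V : Set G) : Prop :=
  ∃ T : Set (MvPolynomial (Bool × Fin n × Fin n) F),
    V = {g | ∀ p ∈ T, eval (phi g) p = 0}

/-- Maps whose coordinates are polynomial in the coordinates of the argument. -/
def PolyMap (w : G → G) : Prop :=
  ∃ Q : Bool × Fin n × Fin n → MvPolynomial (Bool × Fin n × Fin n) F,
    ∀ (g : G) i, phi (w g) i = eval (phi g) (Q i)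

theorem polyMap_id : PolyMap (fun g : G => g) :=
  ⟨fun i => X i, fun g i => (eval_X _).symm⟩

theorem polyMap_const (c : G) : PolyMap (fun _ : G => c) :=
  ⟨fun i => MvPolynomial.C (phi c i), fun g i => (eval_C _).symm⟩

theorem polyMap_inv {w : G → G} (hw : PolyMap w) : PolyMap (fun g => (w g)⁻¹) := by
  obtain ⟨Q, hQ⟩ := hw
  refine ⟨fun bij => Q (!bij.1, bij.2.1, bij.2.2), fun g bij => ?_⟩
  obtain ⟨b, i, j⟩ := bij
  cases b
  · show mat ((w g)⁻¹)⁻¹ i j = eval (phi g) (Q (!false, i, j))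
    rw [inv_inv]
    exact hQ g (true, i, j)
  · show mat ((w g)⁻¹) i j = eval (phi g) (Q (!true, i, j))
    exact hQ g (false, i, j)

theorem polyMap_mul {w₁ w₂ : G → G} (h₁ : PolyMap w₁) (h₂ : PolyMap w₂) :
    PolyMap (fun g => w₁ g * w₂ g) := by
  obtain ⟨Q₁, hQ₁⟩ := h₁
  obtain ⟨Q₂, hQ₂⟩ := h₂
  refine ⟨fun bij =>
    if bij.1 then ∑ k : Fin n, Q₁ (true, bij.2.1, k) * Q₂ (true, k, bij.2.2)
    else ∑ k : Fin n, Q₂ (false, bij.2.1, k) * Q₁ (false, k, bij.2.2), fun g bij => ?_⟩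
  obtain ⟨b, i, j⟩ := bij
  cases b
  · show mat (w₁ g * w₂ g)⁻¹ i j
        = eval (phi g) (∑ k : Fin n, Q₂ (false, i, k) * Q₁ (false, k, j))
    rw [show (w₁ g * w₂ g)⁻¹ = (w₂ g)⁻¹ * (w₁ g)⁻¹ from mul_inv_rev _ _,
      mat_mul, Matrix.mul_apply, map_sum]
    refine Finset.sum_congr rfl fun k _ => ?_
    rw [map_mul, ← hQ₂, ← hQ₁, phi_false, phi_false]
  · show mat (w₁ g * w₂ g) i j
        = eval (phi g) (∑ k : Fin n, Q₁ (true, i, k) * Q₂ (true, k, j))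
    rw [mat_mul, Matrix.mul_apply, map_sum]
    refine Finset.sum_congr rfl fun k _ => ?_
    rw [map_mul, ← hQ₂, ← hQ₁, phi_true, phi_true]

theorem Alg.preimage {V : Set G} (hV : Alg V) {w : G → G} (hw : PolyMap w) :
    Alg {g | w g ∈ V} := by
  obtain ⟨T, rfl⟩ := hV
  obtain ⟨Q, hQ⟩ := hw
  refine ⟨(fun p => eval₂ MvPolynomial.C Q p) '' T, ?_⟩
  ext g
  simp only [Set.mem_setOf_eq, Set.forall_mem_image]
  refine forall₂_congr fun p hp => ?_
  rw [myeval]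
  have : (fun i => eval (phi g) (Q i)) = phi (w g) := by
    funext i; rw [hQ]
  rw [this]

theorem Alg.iInter {ι : Sort*} {V : ι → Set G} (h : ∀ i, Alg (V i)) : Alg (⋂ i, V i) := by
  choose T hT using h
  refine ⟨⋃ i, T i, ?_⟩
  ext g
  simp only [Set.mem_iInter, Set.mem_setOf_eq, Set.mem_iUnion]
  constructor
  · rintro hg p ⟨i, hp⟩
    have := hg i
    rw [hT i] at this
    exact this p hp
  · intro hg i
    rw [hT i]
    exact fun p hp => hg p ⟨i, hp⟩

theorem Alg.inter {V W : Set G} (hV : Alg V) (hW : Alg W) : Alg (V ∩ W) := by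
  obtain ⟨T₁, rfl⟩ := hV
  obtain ⟨T₂, rfl⟩ := hW
  refine ⟨T₁ ∪ T₂, ?_⟩
  ext g
  simp only [Set.mem_inter_iff, Set.mem_setOf_eq, Set.mem_union]
  constructor
  · rintro ⟨h₁, h₂⟩ p (hp | hp)
    · exact h₁ p hp
    · exact h₂ p hp
  · intro h
    exact ⟨fun p hp => h p (Or.inl hp), fun p hp => h p (Or.inr hp)⟩

theorem alg_univ : Alg (Set.univ : Set G) :=
  ⟨∅, by ext g; simp⟩

theorem alg_one : Alg ({1} : Set G) := by
  refine ⟨Set.range (fun ij : Fin n × Fin n =>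
    X (true, ij.1, ij.2) - MvPolynomial.C ((1 : Matrix (Fin n) (Fin n) F) ij.1 ij.2)), ?_⟩
  ext g
  simp only [Set.mem_singleton_iff, Set.mem_setOf_eq, Set.forall_mem_range]
  constructor
  · rintro rfl ij
    rw [map_sub, eval_X, eval_C, phi_true, mat_one, sub_self]
  · intro h
    apply mat_injective
    rw [mat_one]
    ext i j
    have := h (i, j)
    rw [map_sub, eval_X, eval_C, phi_true] at this
    have := sub_eq_zero.mp this
    exact this

/-- The vanishing ideal of a subset of `G`. -/
def vanIdeal (V : Set G) : Ideal (MvPolynomial (Bool × Fin n × Fin n) F) where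
  carrier := {p | ∀ g ∈ V, eval (phi g) p = 0}
  add_mem' := by
    intro a b ha hb g hg
    rw [map_add, ha g hg, hb g hg, add_zero]
  zero_mem' := by
    intro g hg
    rw [map_zero]
  smul_mem' := by
    intro c p hp g hg
    rw [smul_eq_mul, map_mul, hp g hg, mul_zero]

theorem vanIdeal_antitone {V W : Set G} (h : V ⊆ W) : vanIdeal W ≤ vanIdeal V :=
  fun p hp g hg => hp g (h hg)

theorem mem_of_vanIdeal_le {V W : Set G} (hV : Alg V) (h : vanIdeal V ≤ vanIdeal W)
    {g : G} (hg : g ∈ W) : g ∈ V := by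
  obtain ⟨T, rfl⟩ := hV
  intro p hp
  have hpI : p ∈ vanIdeal {g : G | ∀ q ∈ T, eval (phi g) q = 0} := fun g' hg' => hg' p hp
  exact h hpI g hg

theorem alg_chain_stabilizes (V : ℕ → Set G) (hdesc : ∀ k, V (k + 1) ⊆ V k)
    (halg : ∀ k, Alg (V k)) : ∃ N, ∀ k, N ≤ k → V k = V N := by
  have hle : ∀ {k l : ℕ}, k ≤ l → V l ⊆ V k := by
    intro k l hkl
    induction l with
    | zero =>
      have : k = 0 := by omega
      subst this; exact subset_rfl
    | succ l IH =>
      rcases Nat.lt_or_ge k (l + 1) with h | h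
      · exact (hdesc l).trans (IH (by omega))
      · have : k = l + 1 := by omega
        subst this; exact subset_rfl
  have hmon : Monotone (fun k => vanIdeal (V k)) := by
    intro k l hkl
    exact vanIdeal_antitone (hle hkl)
  obtain ⟨N, hN⟩ := monotone_stabilizes_iff_noetherian.mpr inferInstance
    ⟨fun k => vanIdeal (V k), hmon⟩
  refine ⟨N, fun k hk => subset_antisymm (hle hk) ?_⟩
  intro g hg
  have heq : vanIdeal (V N) = vanIdeal (V k) := hN k hk
  exact mem_of_vanIdeal_le (halg k) (le_of_eq heq.symm) hg

theorem conj_inv_mem {D : Set G} (hD : Alg D) (g : G) (hfwd : ∀ d ∈ D, g * d * g⁻¹ ∈ D) :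
    ∀ d ∈ D, g⁻¹ * d * g ∈ D := by
  set V : ℕ → Set G := fun m => {x | (g ^ m)⁻¹ * x * g ^ m ∈ D} with hV
  have halg : ∀ m, Alg (V m) := by
    intro m
    exact hD.preimage (polyMap_mul (polyMap_mul (polyMap_const (g ^ m)⁻¹) polyMap_id)
      (polyMap_const (g ^ m)))
  have hdesc : ∀ m, V (m + 1) ⊆ V m := by
    intro m x hx
    have hx' : (g ^ (m + 1))⁻¹ * x * g ^ (m + 1) ∈ D := hx
    have := hfwd _ hx'
    have heq : g * ((g ^ (m + 1))⁻¹ * x * g ^ (m + 1)) * g⁻¹ = (g ^ m)⁻¹ * x * g ^ m := by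
      rw [pow_succ]; group
    rw [heq] at this
    exact this
  obtain ⟨N, hstab⟩ := alg_chain_stabilizes V hdesc halg
  intro d hd
  have h1 : g ^ N * d * (g ^ N)⁻¹ ∈ V N := by
    show (g ^ N)⁻¹ * (g ^ N * d * (g ^ N)⁻¹) * g ^ N ∈ D
    rw [show (g ^ N)⁻¹ * (g ^ N * d * (g ^ N)⁻¹) * g ^ N = d by group]
    exact hd
  have h2 : g ^ N * d * (g ^ N)⁻¹ ∈ V (N + 1) := by
    rw [hstab (N + 1) (by omega)]
    exact h1
  have h3 : (g ^ (N + 1))⁻¹ * (g ^ N * d * (g ^ N)⁻¹) * g ^ (N + 1) ∈ D := h2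
  rwa [show (g ^ (N + 1))⁻¹ * (g ^ N * d * (g ^ N)⁻¹) * g ^ (N + 1) = g⁻¹ * d * g by
    rw [pow_succ]; group] at h3

end AlgPart

section MainPart

open MvPolynomial

variable {F : Type*} [Field F] {n : ℕ} {G : Subgroup (Matrix.GeneralLinearGroup (Fin n) F)}

theorem alg_iterCent {S A : Set G} (hS : SGSet S) (hSalg : Alg S) :
    ∀ j, Alg (iterCent S A j) := by
  intro j
  induction j using Nat.strong_induction_on with
  | _ j IH =>
    match j, IH with
    | 0, _ =>
      rw [iterCent_zero]
      exact alg_one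
    | (j+1), IH =>
      have hCS : ∀ m, iterCent S A m ⊆ S := fun m => iterCent_subset_s11 hS m
      have key : iterCent S A (j+1) = S ∩
          ((⋂ (nn : ℕ), ⋂ (_ : nn ≤ j), ⋂ (d : iterCent S A nn),
              ({x : G | x * ↑d * x⁻¹ ∈ iterCent S A nn} ∩
                {x : G | x⁻¹ * ↑d * x ∈ iterCent S A nn})) ∩
            ⋂ (a : A), {x : G | x * ↑a * x⁻¹ * (↑a)⁻¹ ∈ iterCent S A j}) := by
        ext x
        simp only [Set.mem_inter_iff, Set.mem_iInter, Set.mem_setOf_eq, mem_iterCent_succ]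
        constructor
        · rintro ⟨h1, h2, h3⟩
          refine ⟨h1, fun nn hn d => ?_, fun a => ?_⟩
          · have hq := (normQ hS (hCS nn) h1).mp (h2 nn hn)
            exact ⟨hq.1 d d.2, hq.2 d d.2⟩
          · have := h3 a a.2
            rwa [commutatorElement_def] at this
        · rintro ⟨h1, h2, h3⟩
          refine ⟨h1, fun nn hn => (normQ hS (hCS nn) h1).mpr
            ⟨fun d hd => (h2 nn hn ⟨d, hd⟩).1, fun d hd => (h2 nn hn ⟨d, hd⟩).2⟩,
            fun a ha => ?_⟩
          rw [commutatorElement_def]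
          exact h3 ⟨a, ha⟩
      rw [key]
      refine hSalg.inter (Alg.inter (Alg.iInter fun nn => Alg.iInter fun hn =>
        Alg.iInter fun d => Alg.inter ?_ ?_) (Alg.iInter fun a => ?_))
      · exact (IH nn (by omega)).preimage
          (polyMap_mul (polyMap_mul polyMap_id (polyMap_const (d : G))) (polyMap_inv polyMap_id))
      · exact (IH nn (by omega)).preimage
          (polyMap_mul (polyMap_mul (polyMap_inv polyMap_id) (polyMap_const (d : G))) polyMap_id)
      · exact (IH j (by omega)).preimage
          (polyMap_mul (polyMap_mul (polyMap_mul polyMap_id (polyMap_const (a : G)))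
            (polyMap_inv polyMap_id)) (polyMap_const (a : G)⁻¹))

theorem SG_alg_env (A : Set G) : ∀ k, SGSet (env A k) ∧ Alg (env A k) := by
  intro k
  induction k with
  | zero =>
    rw [env_zero]
    refine ⟨⟨trivial, fun _ _ => trivial, fun _ => trivial⟩, alg_univ⟩
  | succ k IH =>
    obtain ⟨hSG, hAlg⟩ := IH
    have hCSG : ∀ j, SGSet (iterCent (env A k) A j) := fun j => SG_iterCent hSG j
    have hCalg : ∀ j, Alg (iterCent (env A k) A j) := alg_iterCent hSG hAlg
    have hasc := iterCent_ascend (A := A) hSG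
    have hfwd : ∀ x, x ∈ env A (k+1) →
        ∀ d ∈ iterCent (env A k) A k, x * d * x⁻¹ ∈ iterCent (env A k) A k := by
      intro x hx d hd
      obtain ⟨hx1, hx2⟩ := mem_env_succ.mp hx
      have h1 : ⁅x, d⁆ ∈ iterCent (env A k) A k := hx2 d (hasc k hd)
      have h2 := (hCSG k).mul_mem h1 hd
      rwa [show ⁅x, d⁆ * d = x * d * x⁻¹ by group] at h2
    constructor
    · constructor
      · exact mem_env_succ.mpr ⟨hSG.one_mem, fun c hc => by
          rw [show ⁅(1 : G), c⁆ = 1 by group]; exact (hCSG k).one_mem⟩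
      · intro x y hx hy
        obtain ⟨hx1, hx2⟩ := mem_env_succ.mp hx
        obtain ⟨hy1, hy2⟩ := mem_env_succ.mp hy
        refine mem_env_succ.mpr ⟨hSG.mul_mem hx1 hy1, fun c hc => ?_⟩
        have h2 : x * ⁅y, c⁆ * x⁻¹ ∈ iterCent (env A k) A k := hfwd x hx _ (hy2 c hc)
        have h3 := (hCSG k).mul_mem h2 (hx2 c hc)
        rwa [show x * ⁅y, c⁆ * x⁻¹ * ⁅x, c⁆ = ⁅x * y, c⁆ by group] at h3
      · intro x hx
        obtain ⟨hx1, hx2⟩ := mem_env_succ.mp hx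
        have hbwd := conj_inv_mem (hCalg k) x (fun d hd => hfwd x hx d hd)
        refine mem_env_succ.mpr ⟨hSG.inv_mem hx1, fun c hc => ?_⟩
        have h1 : ⁅x, c⁆⁻¹ ∈ iterCent (env A k) A k := (hCSG k).inv_mem (hx2 c hc)
        have h2 := hbwd _ h1
        rwa [show x⁻¹ * ⁅x, c⁆⁻¹ * x = ⁅x⁻¹, c⁆ by group] at h2
    · have key : env A (k+1) = env A k ∩
          ⋂ (c : iterCent (env A k) A (k+1)),
            {g : G | g * ↑c * g⁻¹ * (↑c)⁻¹ ∈ iterCent (env A k) A k} := by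
        ext g
        simp only [Set.mem_inter_iff, Set.mem_iInter, Set.mem_setOf_eq, mem_env_succ]
        constructor
        · rintro ⟨h1, h2⟩
          refine ⟨h1, fun c => ?_⟩
          have := h2 c c.2
          rwa [commutatorElement_def] at this
        · rintro ⟨h1, h2⟩
          refine ⟨h1, fun c hc => ?_⟩
          rw [commutatorElement_def]
          exact h2 ⟨c, hc⟩
      rw [key]
      exact hAlg.inter (Alg.iInter fun c => (hCalg k).preimage
        (polyMap_mul (polyMap_mul (polyMap_mul polyMap_id (polyMap_const (c : G)))
          (polyMap_inv polyMap_id)) (polyMap_const (c : G)⁻¹)))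

end MainPart


/-- For a subgroup `G` of `GL(n, F)` and a subgroup `H` of `G`, the chain of
envelopes `(E_k(H))_k` stabilizes. -/
theorem env_stabilizes_of_linear (F : Type*) [Field F] (n : ℕ)
    (G : Subgroup (Matrix.GeneralLinearGroup (Fin n) F)) (H : Subgroup G) :
    ∃ N : ℕ, ∀ k ≥ N, env ((H : Set G) : Set G) k = env ((H : Set G) : Set G) N := by
  obtain ⟨N, hN⟩ := alg_chain_stabilizes (env ((H : Set G) : Set G))
    (fun k x hx => (mem_env_succ.mp hx).1)
    (fun k => (SG_alg_env ((H : Set G) : Set G) k).2)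
  exact ⟨N, fun k hk => hN k hk⟩
end
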